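/- Let f be a continuous function on R^p admitting a selection representation (s, f_1, ..., f_m) with each f_i locally Lipschitz (e.g. C^1) and the segment-piecewise-constancy property of the index s. Then f is locally Lipschitz. -/
import Mathlib

open Set

/-- A continuous real function Lipschitz on a set is Lipschitz on its closure. -/
lemma lipschitzOnWith_closure' {g : ℝ → ℝ} (hg : Continuous g) {K : NNReal} {S : Set ℝ}
    (h : LipschitzOnWith K g S) : LipschitzOnWith K g (closure S) := by
  apply LipschitzOnWith.of_dist_le_mul
  intro x hx y hy
  have hcl : IsClosed {q : ℝ × ℝ | dist (g q.1) (g q.2) ≤ K * dist q.1 q.2} := by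
    apply isClosed_le
    · exact (hg.comp continuous_fst).dist (hg.comp continuous_snd)
    · exact continuous_const.mul (continuous_fst.dist continuous_snd)
  have hsub : S ×ˢ S ⊆ {q : ℝ × ℝ | dist (g q.1) (g q.2) ≤ K * dist q.1 q.2} := by
    rintro ⟨u, v⟩ ⟨hu, hv⟩
    exact h.dist_le_mul u hu v hv
  have : (x, y) ∈ closure (S ×ˢ S) := by
    rw [closure_prod_eq]; exact ⟨hx, hy⟩
  exact hcl.closure_subset (closure_mono hsub this) 

theorem selection_locallyLipschitz {p m : ℕ}
    (f : EuclideanSpace ℝ (Fin p) → ℝ) (hf : Continuous f)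
    (fs : Fin m → EuclideanSpace ℝ (Fin p) → ℝ)
    (hfs : ∀ i, LocallyLipschitz (fs i))
    (s : EuclideanSpace ℝ (Fin p) → Fin m)
    (hsel : ∀ x, f x = fs (s x) x)
    (hpc : ∀ x y : EuclideanSpace ℝ (Fin p), ∃ (N : ℕ) (a : ℕ → ℝ),
      a 0 = 0 ∧ a N = 1 ∧ (∀ i < N, a i < a (i + 1)) ∧
      ∀ i < N, ∀ t₁ ∈ Ioo (a i) (a (i + 1)), ∀ t₂ ∈ Ioo (a i) (a (i + 1)),
        s (x + t₁ • (y - x)) = s (x + t₂ • (y - x))) :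
    LocallyLipschitz f := by
  intro x0
  choose K t ht hlip using fun i => hfs i x0
  have hINT : (⋂ i, t i) ∈ nhds x0 := (Filter.iInter_mem).mpr ht
  obtain ⟨r, hr, hball⟩ := Metric.mem_nhds_iff.mp hINT
  set K0 : NNReal := Finset.univ.sup K with hK0
  refine ⟨K0, Metric.ball x0 r, Metric.ball_mem_nhds x0 hr, ?_⟩
  have hlipball : ∀ i, LipschitzOnWith K0 (fs i) (Metric.ball x0 r) := by
    intro i
    intro u hu v hv
    have h1 := hlip i (hball.trans (iInter_subset t i) hu) (hball.trans (iInter_subset t i) hv)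
    refine h1.trans (mul_le_mul_left ?_ _)
    exact_mod_cast ENNReal.coe_le_coe.mpr (Finset.le_sup (Finset.mem_univ i))
  apply LipschitzOnWith.of_dist_le_mul
  intro x hx y hy
  obtain ⟨N, a, ha0, haN, hmono, hconst⟩ := hpc x y
  set γ : ℝ → EuclideanSpace ℝ (Fin p) := fun u => x + u • (y - x) with hγ
  have hγlip : LipschitzWith ‖y - x‖₊ γ := by
    apply LipschitzWith.of_dist_le_mul
    intro t₁ t₂
    have : γ t₁ - γ t₂ = (t₁ - t₂) • (y - x) := by simp [hγ]; module
    rw [dist_eq_norm, this, norm_smul, Real.norm_eq_abs, Real.dist_eq, coe_nnnorm, mul_comm]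
  have hmem : ∀ u ∈ Icc (0:ℝ) 1, γ u ∈ Metric.ball x0 r := by
    intro u hu
    have h1 : γ u = (1 - u) • x + u • y := by simp [hγ]; module
    rw [h1]
    exact (convex_ball x0 r) hx hy (by linarith [hu.2]) hu.1 (by ring)
  have hγlipOn : LipschitzOnWith ‖y - x‖₊ γ (Icc (0:ℝ) 1) := hγlip.lipschitzOnWith
  -- monotonicity of a
  have hmono' : ∀ j k, j ≤ k → k ≤ N → a j ≤ a k := by
    intro j k hjk hkN
    induction k, hjk using Nat.le_induction with
    | base => exact le_refl _
    | succ k hk ih => exact (ih (by omega)).trans (hmono k (by omega)).le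
  -- key bound per interval
  have hkey : ∀ i < N, dist (f (γ (a i))) (f (γ (a (i + 1)))) ≤
      (K0 : ℝ) * ‖y - x‖ * (a (i + 1) - a i) := by
    intro i hi
    set c := a i
    set d := a (i + 1)
    have hcd : c < d := hmono i hi
    have hc0 : (0:ℝ) ≤ c := ha0 ▸ hmono' 0 i (Nat.zero_le _) (by omega)
    have hd1 : d ≤ 1 := haN ▸ hmono' (i + 1) N (by omega) le_rfl
    have hIccsub : Icc c d ⊆ Icc (0:ℝ) 1 := Icc_subset_Icc hc0 hd1
    set τ : ℝ := (c + d) / 2 with hτ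
    have hτmem : τ ∈ Ioo c d := ⟨by simp [hτ]; linarith, by simp [hτ]; linarith⟩
    set j0 := s (γ τ) with hj0
    have heq : ∀ u ∈ Ioo c d, f (γ u) = fs j0 (γ u) := by
      intro u hu
      rw [hsel (γ u), hj0]
      congr 1
      exact hconst i hi u hu τ hτmem
    have hcomp : LipschitzOnWith (K0 * ‖y - x‖₊) (fs j0 ∘ γ) (Icc (0:ℝ) 1) :=
      (hlipball j0).comp hγlipOn (fun u hu => hmem u hu)
    have hIoo : LipschitzOnWith (K0 * ‖y - x‖₊) (f ∘ γ) (Ioo c d) := by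
      intro u hu v hv
      have h1 := hcomp (hIccsub (Ioo_subset_Icc_self hu)) (hIccsub (Ioo_subset_Icc_self hv))
      simpa [Function.comp, heq u hu, heq v hv] using h1
    have hcont : Continuous (f ∘ γ) := hf.comp (continuous_const.add (continuous_id.smul continuous_const))
    have hIcc : LipschitzOnWith (K0 * ‖y - x‖₊) (f ∘ γ) (Icc c d) := by
      have := lipschitzOnWith_closure' hcont hIoo
      rwa [closure_Ioo hcd.ne] at this
    have h2 := hIcc.dist_le_mul c ⟨le_rfl, hcd.le⟩ d ⟨hcd.le, le_rfl⟩
    have h3 : dist c d = d - c := by rw [Real.dist_eq, abs_sub_comm, abs_of_nonneg (by linarith)]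
    rw [h3] at h2
    calc dist (f (γ c)) (f (γ d)) ≤ (K0 * ‖y - x‖₊ : NNReal) * (d - c) := h2
      _ = (K0 : ℝ) * ‖y - x‖ * (d - c) := by push_cast; ring
  -- chain
  have hchain : dist (f (γ (a 0))) (f (γ (a N))) ≤
      ∑ i ∈ Finset.range N, dist (f (γ (a i))) (f (γ (a (i + 1)))) :=
    dist_le_range_sum_dist (fun i => f (γ (a i))) N
  have hsum : ∑ i ∈ Finset.range N, dist (f (γ (a i))) (f (γ (a (i + 1)))) ≤
      (K0 : ℝ) * ‖y - x‖ * (a N - a 0) := by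
    rw [← Finset.sum_range_sub a]
    rw [Finset.mul_sum]
    apply Finset.sum_le_sum
    intro i hi
    exact hkey i (Finset.mem_range.mp hi)
  have hγ0 : γ 0 = x := by simp [hγ]
  have hγ1 : γ 1 = y := by simp [hγ]
  have hdxy : ‖y - x‖ = dist x y := by rw [dist_eq_norm, norm_sub_rev]
  calc dist (f x) (f y) = dist (f (γ (a 0))) (f (γ (a N))) := by rw [ha0, haN, hγ0, hγ1]
    _ ≤ (K0 : ℝ) * ‖y - x‖ * (a N - a 0) := hchain.trans hsum
    _ = (K0 : ℝ) * dist x y := by rw [ha0, haN, hdxy]; ring
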